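/- For fixed r > 0, σ > 0, K > 0, the market exercise threshold λ ↦ b*(λ) = 2rK/(2(r+λ) + σ²) is strictly decreasing in λ on [0, ∞), and for each fixed s > 0 the perpetual defaultable put price λ ↦ P(s; λ) is nondecreasing in λ on [0, ∞). -/

import Mathlib

open Real

/-- `θ(λ) = 2(r+λ)/σ²`. -/
noncomputable def perpTheta (r lam sigma : ℝ) : ℝ := 2 * (r + lam) / sigma ^ 2

/-- Optimal exercise threshold `b*(λ) = 2rK/(2(r+λ) + σ²)`. -/
noncomputable def perpBstar (r lam sigma K : ℝ) : ℝ := 2 * r * K / (2 * (r + lam) + sigma ^ 2)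

/-- Market price of a perpetual American put (strike `K`) on a defaultable stock
with constant default intensity `λ`:
`P(s;λ) = K − s` for `0 < s ≤ b*(λ)`, and
`P(s;λ) = (rK/((r+λ)(θ(λ)+1)))·(s/b*(λ))^{−θ(λ)} + λK/(r+λ)` for `s > b*(λ)`. -/
noncomputable def perpPut (r lam sigma K s : ℝ) : ℝ :=
  if s ≤ perpBstar r lam sigma K then K - s
  else (r * K / ((r + lam) * (perpTheta r lam sigma + 1)))
        * (s / perpBstar r lam sigma K) ^ (-(perpTheta r lam sigma)) + lam * K / (r + lam)

noncomputable def Fput (r sigma K s lam : ℝ) : ℝ :=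
  r * K * sigma ^ 2 / ((r + lam) * (2 * (r + lam) + sigma ^ 2)) *
    Real.exp (-(2 * (r + lam) / sigma ^ 2) *
      Real.log (s * (2 * (r + lam) + sigma ^ 2) / (2 * r * K))) + lam * K / (r + lam)

lemma perpPut_eq_Fput (r sigma K s lam : ℝ) (hr : 0 < r) (hsigma : 0 < sigma)
    (hK : 0 < K) (hs : 0 < s) (hu : 0 < r + lam)
    (hb : ¬ s ≤ perpBstar r lam sigma K) :
    perpPut r lam sigma K s = Fput r sigma K s lam := by
  have hD : (0:ℝ) < 2 * (r + lam) + sigma ^ 2 := by positivity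
  have hbpos : 0 < perpBstar r lam sigma K := by unfold perpBstar; positivity
  have hx : 0 < s / perpBstar r lam sigma K := div_pos hs hbpos
  have h2 : s / perpBstar r lam sigma K = s * (2 * (r + lam) + sigma ^ 2) / (2 * r * K) := by
    unfold perpBstar
    rw [div_div_eq_mul_div]
  have h1 : r * K / ((r + lam) * (perpTheta r lam sigma + 1))
      = r * K * sigma ^ 2 / ((r + lam) * (2 * (r + lam) + sigma ^ 2)) := by
    unfold perpTheta
    field_simp
  rw [perpPut, if_neg hb, Real.rpow_def_of_pos hx, h2, h1, Fput, perpTheta, mul_comm (Real.log _)]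

lemma Fput_ge (r sigma K s lam : ℝ) (hr : 0 < r) (hsigma : 0 < sigma)
    (hK : 0 < K) (hs : 0 < s) (hu : 0 < r + lam)
    (hb : 2 * r * K ≤ s * (2 * (r + lam) + sigma ^ 2)) :
    K - s ≤ Fput r sigma K s lam := by
  have hD : (0:ℝ) < 2 * (r + lam) + sigma ^ 2 := by positivity
  set θ : ℝ := 2 * (r + lam) / sigma ^ 2 with hθdef
  have hθ : 0 < θ := by positivity
  set x : ℝ := s * (2 * (r + lam) + sigma ^ 2) / (2 * r * K) with hxdef
  have hx0 : 0 < x := by positivity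
  have hx1 : (1:ℝ) ≤ x := (one_le_div (by positivity)).2 hb
  have hlog : Real.log x ≤ x - 1 := Real.log_le_sub_one_of_pos hx0
  have hexp : 1 + θ - θ * x ≤ Real.exp (-θ * Real.log x) := by
    have h1 : -θ * Real.log x + 1 ≤ Real.exp (-θ * Real.log x) := Real.add_one_le_exp _
    nlinarith [hθ.le, mul_le_mul_of_nonneg_left hlog hθ.le]
  have hkey : K - s = r * K * sigma ^ 2 / ((r + lam) * (2 * (r + lam) + sigma ^ 2))
      * (1 + θ - θ * x) + lam * K / (r + lam) := by
    rw [hθdef, hxdef]; field_simp; ring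
  rw [hkey, Fput]
  have hcoef : 0 ≤ r * K * sigma ^ 2 / ((r + lam) * (2 * (r + lam) + sigma ^ 2)) := by positivity
  gcongr

lemma hasDerivAt_Fput (r sigma K s lam : ℝ) (hr : 0 < r) (hsigma : 0 < sigma)
    (hK : 0 < K) (hs : 0 < s) (hu : 0 < r + lam) :
    HasDerivAt (Fput r sigma K s)
      (r * K / (r + lam) ^ 2
        - r * K / ((r + lam) * (2 * (r + lam) + sigma ^ 2))
          * Real.exp (-(2 * (r + lam) / sigma ^ 2) *
              Real.log (s * (2 * (r + lam) + sigma ^ 2) / (2 * r * K)))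
          * ((2 * (r + lam) + sigma ^ 2) / (r + lam)
             + 2 * Real.log (s * (2 * (r + lam) + sigma ^ 2) / (2 * r * K)))) lam := by
  have hD : (0:ℝ) < 2 * (r + lam) + sigma ^ 2 := by positivity
  have hune : (r + lam) ≠ 0 := ne_of_gt hu
  have hDne : (2 * (r + lam) + sigma ^ 2) ≠ 0 := ne_of_gt hD
  have hgne : ((r + lam) * (2 * (r + lam) + sigma ^ 2)) ≠ 0 := mul_ne_zero hune hDne
  have hmne : s * (2 * (r + lam) + sigma ^ 2) / (2 * r * K) ≠ 0 := by positivity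
  have hu' : HasDerivAt (fun l : ℝ => r + l) 1 lam := (hasDerivAt_id lam).const_add r
  have hD' : HasDerivAt (fun l : ℝ => 2 * (r + l) + sigma ^ 2) (2 * 1) lam :=
    (hu'.const_mul 2).add_const (sigma ^ 2)
  have hg : HasDerivAt (fun l : ℝ => (r + l) * (2 * (r + l) + sigma ^ 2))
      (1 * (2 * (r + lam) + sigma ^ 2) + (r + lam) * (2 * 1)) lam := hu'.mul hD'
  have hC : HasDerivAt (fun l : ℝ => r * K * sigma ^ 2 / ((r + l) * (2 * (r + l) + sigma ^ 2)))
      ((0 * ((r + lam) * (2 * (r + lam) + sigma ^ 2)) - r * K * sigma ^ 2 *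
        (1 * (2 * (r + lam) + sigma ^ 2) + (r + lam) * (2 * 1)))
        / ((r + lam) * (2 * (r + lam) + sigma ^ 2)) ^ 2) lam :=
    (hasDerivAt_const lam (r * K * sigma ^ 2)).div hg hgne
  have hm : HasDerivAt (fun l : ℝ => s * (2 * (r + l) + sigma ^ 2) / (2 * r * K))
      (s * (2 * 1) / (2 * r * K)) lam := (hD'.const_mul s).div_const (2 * r * K)
  have hL : HasDerivAt (fun l : ℝ => Real.log (s * (2 * (r + l) + sigma ^ 2) / (2 * r * K)))
      (s * (2 * 1) / (2 * r * K) / (s * (2 * (r + lam) + sigma ^ 2) / (2 * r * K))) lam :=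
    hm.log hmne
  have ha : HasDerivAt (fun l : ℝ => -(2 * (r + l) / sigma ^ 2)) (-(2 * 1 / sigma ^ 2)) lam :=
    ((hu'.const_mul 2).div_const (sigma ^ 2)).neg
  have hφ : HasDerivAt (fun l : ℝ => -(2 * (r + l) / sigma ^ 2) *
      Real.log (s * (2 * (r + l) + sigma ^ 2) / (2 * r * K)))
      (-(2 * 1 / sigma ^ 2) * Real.log (s * (2 * (r + lam) + sigma ^ 2) / (2 * r * K))
        + -(2 * (r + lam) / sigma ^ 2) *
          (s * (2 * 1) / (2 * r * K) / (s * (2 * (r + lam) + sigma ^ 2) / (2 * r * K)))) lam :=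
    ha.mul hL
  have hE := hφ.exp
  have hT : HasDerivAt (fun l : ℝ => l * K / (r + l))
      ((1 * K * (r + lam) - lam * K * 1) / (r + lam) ^ 2) lam :=
    ((hasDerivAt_id lam).mul_const K).div hu' hune
  have H := (hC.mul hE).add hT
  refine HasDerivAt.congr_deriv (f := Fput r sigma K s) H ?_
  have hlogne : s * (2 * (r + lam) + sigma ^ 2) / (2 * r * K) ≠ 0 := hmne
  field_simp
  ring

lemma Fput_deriv_nonneg (r sigma K s lam : ℝ) (hr : 0 < r) (hsigma : 0 < sigma)
    (hK : 0 < K) (hs : 0 < s) (hu : 0 < r + lam)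
    (hb : 2 * r * K ≤ s * (2 * (r + lam) + sigma ^ 2)) :
    0 ≤ r * K / (r + lam) ^ 2
        - r * K / ((r + lam) * (2 * (r + lam) + sigma ^ 2))
          * Real.exp (-(2 * (r + lam) / sigma ^ 2) *
              Real.log (s * (2 * (r + lam) + sigma ^ 2) / (2 * r * K)))
          * ((2 * (r + lam) + sigma ^ 2) / (r + lam)
             + 2 * Real.log (s * (2 * (r + lam) + sigma ^ 2) / (2 * r * K))) := by
  have hD : (0:ℝ) < 2 * (r + lam) + sigma ^ 2 := by positivity
  set L : ℝ := Real.log (s * (2 * (r + lam) + sigma ^ 2) / (2 * r * K)) with hLdef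
  have hL0 : 0 ≤ L := Real.log_nonneg ((one_le_div (by positivity)).2 hb)
  set θ : ℝ := 2 * (r + lam) / sigma ^ 2 with hθdef
  have hθ0 : 0 < θ := by positivity
  rw [sub_nonneg]
  have hE : Real.exp (-θ * L) = (Real.exp (θ * L))⁻¹ := by
    rw [← Real.exp_neg]; ring_nf
  have hkey : Real.exp (-θ * L) * ((2 * (r + lam) + sigma ^ 2) / (r + lam) + 2 * L)
      ≤ (2 * (r + lam) + sigma ^ 2) / (r + lam) := by
    rw [hE]
    rw [inv_mul_le_iff₀ (Real.exp_pos _)]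
    have h1 : θ * L + 1 ≤ Real.exp (θ * L) := Real.add_one_le_exp _
    have h2 : (2 * (r + lam) + sigma ^ 2) / (r + lam) + 2 * L
        ≤ (2 * (r + lam) + sigma ^ 2) / (r + lam) * (1 + θ * L) := by
      have hθL : 2 * L ≤ (2 * (r + lam) + sigma ^ 2) / (r + lam) * (θ * L) := by
        have heq : (2 * (r + lam) + sigma ^ 2) / (r + lam) * (θ * L)
            = 2 * L * ((2 * (r + lam) + sigma ^ 2) / sigma ^ 2) := by
          rw [hθdef]; field_simp
        rw [heq]
        have h1le : (1:ℝ) ≤ (2 * (r + lam) + sigma ^ 2) / sigma ^ 2 :=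
          (one_le_div (by positivity)).2 (by nlinarith)
        nlinarith [mul_le_mul_of_nonneg_left h1le (show (0:ℝ) ≤ 2 * L by linarith)]
      nlinarith
    calc (2 * (r + lam) + sigma ^ 2) / (r + lam) + 2 * L
        ≤ (2 * (r + lam) + sigma ^ 2) / (r + lam) * (1 + θ * L) := h2
      _ ≤ (2 * (r + lam) + sigma ^ 2) / (r + lam) * Real.exp (θ * L) := by
          apply mul_le_mul_of_nonneg_left _ (by positivity)
          linarith
      _ = Real.exp (θ * L) * ((2 * (r + lam) + sigma ^ 2) / (r + lam)) := by ring
  calc r * K / ((r + lam) * (2 * (r + lam) + sigma ^ 2)) * Real.exp (-θ * L)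
        * ((2 * (r + lam) + sigma ^ 2) / (r + lam) + 2 * L)
      = r * K / ((r + lam) * (2 * (r + lam) + sigma ^ 2)) *
        (Real.exp (-θ * L) * ((2 * (r + lam) + sigma ^ 2) / (r + lam) + 2 * L)) := by ring
    _ ≤ r * K / ((r + lam) * (2 * (r + lam) + sigma ^ 2)) *
        ((2 * (r + lam) + sigma ^ 2) / (r + lam)) :=
        mul_le_mul_of_nonneg_left hkey (by positivity)
    _ = r * K / (r + lam) ^ 2 := by field_simp

lemma Fput_mono (r sigma K s : ℝ) (hr : 0 < r) (hsigma : 0 < sigma) (hK : 0 < K) (hs : 0 < s)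
    (lam1 lam2 : ℝ) (h1 : 0 ≤ lam1) (h12 : lam1 ≤ lam2)
    (hb : 2 * r * K ≤ s * (2 * (r + lam1) + sigma ^ 2)) :
    Fput r sigma K s lam1 ≤ Fput r sigma K s lam2 := by
  have hder : ∀ l ∈ Set.Icc lam1 lam2, 0 < r + l := fun l hl => by
    have := hl.1; nlinarith
  have hmono : MonotoneOn (Fput r sigma K s) (Set.Icc lam1 lam2) := by
    apply monotoneOn_of_deriv_nonneg (convex_Icc _ _)
    · intro l hl
      exact (hasDerivAt_Fput r sigma K s l hr hsigma hK hs (hder l hl)).continuousAt.continuousWithinAt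
    · intro l hl
      rw [interior_Icc] at hl
      exact (hasDerivAt_Fput r sigma K s l hr hsigma hK hs
        (hder l ⟨hl.1.le, hl.2.le⟩)).differentiableAt.differentiableWithinAt
    · intro l hl
      rw [interior_Icc] at hl
      have hul : 0 < r + l := hder l ⟨hl.1.le, hl.2.le⟩
      rw [(hasDerivAt_Fput r sigma K s l hr hsigma hK hs hul).deriv]
      apply Fput_deriv_nonneg r sigma K s l hr hsigma hK hs hul
      calc 2 * r * K ≤ s * (2 * (r + lam1) + sigma ^ 2) := hb
        _ ≤ s * (2 * (r + l) + sigma ^ 2) := by nlinarith [hl.1]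
  exact hmono (Set.left_mem_Icc.2 h12) (Set.right_mem_Icc.2 h12) h12

lemma perpBstar_cond (r sigma K s lam : ℝ) (hsigma : 0 < sigma) (hu : 0 < r + lam) :
    s ≤ perpBstar r lam sigma K ↔ s * (2 * (r + lam) + sigma ^ 2) ≤ 2 * r * K := by
  have hD : (0:ℝ) < 2 * (r + lam) + sigma ^ 2 := by positivity
  rw [perpBstar, le_div_iff₀ hD]

/-- **Monotonicity in the default intensity.**  For fixed `r > 0`, `σ > 0`,
`K > 0`, the market exercise threshold `λ ↦ b*(λ) = 2rK/(2(r+λ)+σ²)` is strictly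
decreasing in `λ` on `[0,∞)`, and for each fixed `s > 0` the perpetual
defaultable put price `λ ↦ P(s;λ)` is nondecreasing in `λ` on `[0,∞)`. -/
theorem perpPut_monotone_in_intensity
    (r sigma K : ℝ) (hr : 0 < r) (hsigma : 0 < sigma) (hK : 0 < K) :
    StrictAntiOn (fun lam => perpBstar r lam sigma K) (Set.Ici 0)
    ∧ ∀ s ∈ Set.Ioi (0 : ℝ),
        MonotoneOn (fun lam => perpPut r lam sigma K s) (Set.Ici 0) := by
  constructor
  · intro a ha b hb hab
    simp only [Set.mem_Ici] at ha hb
    have hDa : (0:ℝ) < 2 * (r + a) + sigma ^ 2 := by positivity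
    simp only [perpBstar]
    exact div_lt_div_of_pos_left (by positivity) hDa (by nlinarith)
  · intro s hs lam1 h1 lam2 h2 h12
    simp only [Set.mem_Ioi] at hs
    simp only [Set.mem_Ici] at h1 h2
    have hu1 : 0 < r + lam1 := by linarith
    have hu2 : 0 < r + lam2 := by linarith
    by_cases hc2 : s ≤ perpBstar r lam2 sigma K
    · -- both in stopping region
      have hc1 : s ≤ perpBstar r lam1 sigma K := by
        rw [perpBstar_cond r sigma K s lam2 hsigma hu2] at hc2
        rw [perpBstar_cond r sigma K s lam1 hsigma hu1]
        nlinarith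
      simp only [perpPut, if_pos hc1, if_pos hc2, le_refl]
    · have hb2 : 2 * r * K ≤ s * (2 * (r + lam2) + sigma ^ 2) := by
        rw [perpBstar_cond r sigma K s lam2 hsigma hu2] at hc2
        linarith [lt_of_not_ge hc2]
      by_cases hc1 : s ≤ perpBstar r lam1 sigma K
      · have e1 : perpPut r lam1 sigma K s = K - s := by rw [perpPut, if_pos hc1]
        show perpPut r lam1 sigma K s ≤ perpPut r lam2 sigma K s
        rw [e1, perpPut_eq_Fput r sigma K s lam2 hr hsigma hK hs hu2 hc2]
        exact Fput_ge r sigma K s lam2 hr hsigma hK hs hu2 hb2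
      · have hb1 : 2 * r * K ≤ s * (2 * (r + lam1) + sigma ^ 2) := by
          rw [perpBstar_cond r sigma K s lam1 hsigma hu1] at hc1
          linarith [lt_of_not_ge hc1]
        simp only
        rw [perpPut_eq_Fput r sigma K s lam1 hr hsigma hK hs hu1 hc1,
            perpPut_eq_Fput r sigma K s lam2 hr hsigma hK hs hu2 hc2]
        exact Fput_mono r sigma K s hr hsigma hK hs lam1 lam2 h1 h12 hb1
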